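/- Let H be the graph obtained from two disjoint 5-cycles by adding a new vertex w joined by an edge to exactly one vertex of each 5-cycle (so H has 11 vertices). For any graph G, let G_H be the graph obtained from G by adding |V(G)| disjoint copies H_1, …, H_{|V(G)|} of H and identifying the vertex w_i of H_i with the i-th vertex of G. Then γ_dR(G_H) = 12·n(G_H)/11, where n(G_H) = 11·|V(G)| is the order of G_H. -/

import Mathlib

/-- A double Roman dominating function on a simple graph `G`:
values in `{0,1,2,3}`, every vertex with value `0` has two neighbors with value `2`
or one neighbor with value `3`, and every vertex with value `1` has a neighbor with
value at least `2`. -/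
def IsDRDF {V : Type*} (G : SimpleGraph V) (f : V → ℕ) : Prop :=
  (∀ v, f v ≤ 3) ∧
  (∀ v, f v = 0 →
    (∃ u w, u ≠ w ∧ G.Adj v u ∧ G.Adj v w ∧ f u = 2 ∧ f w = 2) ∨ ∃ u, G.Adj v u ∧ f u = 3) ∧
  (∀ v, f v = 1 → ∃ u, G.Adj v u ∧ 2 ≤ f u)

/-- The double Roman domination number: the minimum weight of a DRDF. -/
noncomputable def gammaDR {V : Type*} [Fintype V] (G : SimpleGraph V) : ℕ :=
  sInf {w | ∃ f, IsDRDF G f ∧ ∑ v, f v = w}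

/-- The vertices that a copy of `H` (two disjoint `5`-cycles plus a new vertex `w`
joined to one vertex of each) contributes to `G_H` besides the identified vertex `w`:
the two `5`-cycles. -/
abbrev HTail : Type := Fin 5 ⊕ Fin 5

/-- Base relation for `G_H`: `G` itself together with, for every vertex `w` of `G`, a
copy of `H` whose special vertex is identified with `w`; in each copy, `w` is joined
to vertex `0` of each of the two `5`-cycles. -/
def ghR {W : Type} (G : SimpleGraph W) :
    (W ⊕ W × HTail) → (W ⊕ W × HTail) → Prop
  | .inl a, .inl b => G.Adj a b
  | .inl a, .inr (w, .inl x) => a = w ∧ x.val = 0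
  | .inl a, .inr (w, .inr x) => a = w ∧ x.val = 0
  | .inr (w, .inl x), .inr (w', .inl y) => w = w' ∧ (x.val + 1) % 5 = y.val
  | .inr (w, .inr x), .inr (w', .inr y) => w = w' ∧ (x.val + 1) % 5 = y.val
  | _, _ => False

/-- The graph `G_H` obtained from `G` by attaching at its `i`-th vertex a copy `H_i`
of `H`, identified at the special vertex `w_i`. -/
def GH {W : Type} (G : SimpleGraph W) : SimpleGraph (W ⊕ W × HTail) :=
  SimpleGraph.fromRel (ghR G)

/- ### auxiliary material -/

def cadj (x y : Fin 5) : Prop := (x.val + 1) % 5 = y.val ∨ (y.val + 1) % 5 = x.val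

instance (x y : Fin 5) : Decidable (cadj x y) := by unfold cadj; infer_instance

def Pn (a : ℕ) (g : Fin 5 → ℕ) : Prop :=
  (∀ x, g x = 0 →
    (∃ u v : Fin 5, u ≠ v ∧ cadj x u ∧ cadj x v ∧ g u = 2 ∧ g v = 2) ∨
    (x.val = 0 ∧ a = 2 ∧ ∃ u, cadj x u ∧ g u = 2) ∨
    (∃ u, cadj x u ∧ g u = 3) ∨ (x.val = 0 ∧ a = 3)) ∧
  (∀ x, g x = 1 → (∃ u, cadj x u ∧ 2 ≤ g u) ∨ (x.val = 0 ∧ 2 ≤ a))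

instance (a : ℕ) (g : Fin 5 → ℕ) : Decidable (Pn a g) := by unfold Pn; infer_instance

set_option maxRecDepth 100000 in
set_option maxHeartbeats 4000000 in
theorem key0 : ∀ (a g0 g1 g2 g3 g4 : Fin 4),
    Pn a.val (fun x => (![g0,g1,g2,g3,g4] x).val) →
      12 ≤ a.val + 2 * (g0.val + g1.val + g2.val + g3.val + g4.val) := by decide

theorem key (a : ℕ) (g : Fin 5 → ℕ) (ha : a ≤ 3) (hg : ∀ x, g x ≤ 3)
    (hp : Pn a g) : 12 ≤ a + 2 * ∑ x, g x := by
  have h0 := hg 0; have h1 := hg 1; have h2 := hg 2; have h3 := hg 3; have h4 := hg 4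
  have hgeq : g = fun x => (![(⟨g 0, by omega⟩ : Fin 4), ⟨g 1, by omega⟩, ⟨g 2, by omega⟩,
      ⟨g 3, by omega⟩, ⟨g 4, by omega⟩] x).val := by
    funext x; fin_cases x <;> rfl
  have := key0 ⟨a, by omega⟩ ⟨g 0, by omega⟩ ⟨g 1, by omega⟩ ⟨g 2, by omega⟩
      ⟨g 3, by omega⟩ ⟨g 4, by omega⟩ (by rw [← hgeq]; exact hp)
  have hsum : ∑ x, g x = g 0 + g 1 + g 2 + g 3 + g 4 := by
    rw [Fin.sum_univ_five]
  simp only [Fin.val_mk] at this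
  omega

/-- Neighbours of a left-cycle vertex. -/
theorem adj_left {W : Type} (G : SimpleGraph W) (w : W) (x : Fin 5)
    (u : W ⊕ W × HTail) (h : (GH G).Adj (.inr (w, .inl x)) u) :
    (u = .inl w ∧ x.val = 0) ∨ ∃ y, u = .inr (w, .inl y) ∧ cadj x y := by
  rw [GH, SimpleGraph.fromRel_adj] at h
  obtain ⟨hne, h | h⟩ := h
  · match u with
    | .inl b => exact absurd h (by simp [ghR])
    | .inr (w', .inl y) =>
        obtain ⟨rfl, hy⟩ := h
        exact Or.inr ⟨y, rfl, Or.inl hy⟩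
    | .inr (w', .inr y) => exact absurd h (by simp [ghR])
  · match u with
    | .inl b =>
        obtain ⟨rfl, hx⟩ := h
        exact Or.inl ⟨rfl, hx⟩
    | .inr (w', .inl y) =>
        obtain ⟨rfl, hy⟩ := h
        exact Or.inr ⟨y, rfl, Or.inr hy⟩
    | .inr (w', .inr y) => exact absurd h (by simp [ghR])

theorem adj_right {W : Type} (G : SimpleGraph W) (w : W) (x : Fin 5)
    (u : W ⊕ W × HTail) (h : (GH G).Adj (.inr (w, .inr x)) u) :
    (u = .inl w ∧ x.val = 0) ∨ ∃ y, u = .inr (w, .inr y) ∧ cadj x y := by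
  rw [GH, SimpleGraph.fromRel_adj] at h
  obtain ⟨hne, h | h⟩ := h
  · match u with
    | .inl b => exact absurd h (by simp [ghR])
    | .inr (w', .inr y) =>
        obtain ⟨rfl, hy⟩ := h
        exact Or.inr ⟨y, rfl, Or.inl hy⟩
    | .inr (w', .inl y) => exact absurd h (by simp [ghR])
  · match u with
    | .inl b =>
        obtain ⟨rfl, hx⟩ := h
        exact Or.inl ⟨rfl, hx⟩
    | .inr (w', .inr y) =>
        obtain ⟨rfl, hy⟩ := h
        exact Or.inr ⟨y, rfl, Or.inr hy⟩
    | .inr (w', .inl y) => exact absurd h (by simp [ghR])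

/-- From a DRDF one gets the local predicate `Pn` on each attached cycle. -/
theorem pn_of_drdf_left {W : Type} (G : SimpleGraph W) (f : (W ⊕ W × HTail) → ℕ)
    (hf : IsDRDF (GH G) f) (w : W) :
    Pn (f (.inl w)) (fun x => f (.inr (w, .inl x))) := by
  obtain ⟨h3, h0, h1⟩ := hf
  constructor
  · intro x hx
    rcases h0 _ hx with ⟨u, v, huv, hau, hav, hu2, hv2⟩ | ⟨u, hau, hu3⟩
    · rcases adj_left G w x u hau with ⟨rfl, hx0⟩ | ⟨y, rfl, hy⟩
      · rcases adj_left G w x v hav with ⟨rfl, _⟩ | ⟨z, rfl, hz⟩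
        · exact absurd rfl huv
        · exact Or.inr (Or.inl ⟨hx0, hu2, z, hz, hv2⟩)
      · rcases adj_left G w x v hav with ⟨rfl, hx0⟩ | ⟨z, rfl, hz⟩
        · exact Or.inr (Or.inl ⟨hx0, hv2, y, hy, hu2⟩)
        · refine Or.inl ⟨y, z, ?_, hy, hz, hu2, hv2⟩
          intro hyz; exact huv (by rw [hyz])
    · rcases adj_left G w x u hau with ⟨rfl, hx0⟩ | ⟨y, rfl, hy⟩
      · exact Or.inr (Or.inr (Or.inr ⟨hx0, hu3⟩))
      · exact Or.inr (Or.inr (Or.inl ⟨y, hy, hu3⟩))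
  · intro x hx
    obtain ⟨u, hau, hu⟩ := h1 _ hx
    rcases adj_left G w x u hau with ⟨rfl, hx0⟩ | ⟨y, rfl, hy⟩
    · exact Or.inr ⟨hx0, hu⟩
    · exact Or.inl ⟨y, hy, hu⟩

theorem pn_of_drdf_right {W : Type} (G : SimpleGraph W) (f : (W ⊕ W × HTail) → ℕ)
    (hf : IsDRDF (GH G) f) (w : W) :
    Pn (f (.inl w)) (fun x => f (.inr (w, .inr x))) := by
  obtain ⟨h3, h0, h1⟩ := hf
  constructor
  · intro x hx
    rcases h0 _ hx with ⟨u, v, huv, hau, hav, hu2, hv2⟩ | ⟨u, hau, hu3⟩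
    · rcases adj_right G w x u hau with ⟨rfl, hx0⟩ | ⟨y, rfl, hy⟩
      · rcases adj_right G w x v hav with ⟨rfl, _⟩ | ⟨z, rfl, hz⟩
        · exact absurd rfl huv
        · exact Or.inr (Or.inl ⟨hx0, hu2, z, hz, hv2⟩)
      · rcases adj_right G w x v hav with ⟨rfl, hx0⟩ | ⟨z, rfl, hz⟩
        · exact Or.inr (Or.inl ⟨hx0, hv2, y, hy, hu2⟩)
        · refine Or.inl ⟨y, z, ?_, hy, hz, hu2, hv2⟩
          intro hyz; exact huv (by rw [hyz])
    · rcases adj_right G w x u hau with ⟨rfl, hx0⟩ | ⟨y, rfl, hy⟩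
      · exact Or.inr (Or.inr (Or.inr ⟨hx0, hu3⟩))
      · exact Or.inr (Or.inr (Or.inl ⟨y, hy, hu3⟩))
  · intro x hx
    obtain ⟨u, hau, hu⟩ := h1 _ hx
    rcases adj_right G w x u hau with ⟨rfl, hx0⟩ | ⟨y, rfl, hy⟩
    · exact Or.inr ⟨hx0, hu⟩
    · exact Or.inl ⟨y, hy, hu⟩

/-- The explicit DRDF of weight `12·|W|`. -/
def fup {W : Type} : (W ⊕ W × HTail) → ℕ
  | .inl _ => 0
  | .inr (_, .inl x) => if x.val = 0 ∨ x.val = 2 then 3 else 0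
  | .inr (_, .inr x) => if x.val = 0 ∨ x.val = 2 then 3 else 0

theorem fup_drdf {W : Type} (G : SimpleGraph W) : IsDRDF (GH G) (fup) := by
  refine ⟨?_, ?_, ?_⟩
  · rintro (a | ⟨w, x | x⟩) <;> simp [fup] <;> split <;> omega
  · rintro (a | ⟨w, x | x⟩) <;> intro hv
    · refine Or.inr ⟨.inr (a, .inl 0), ?_, by simp [fup]⟩
      rw [GH, SimpleGraph.fromRel_adj]
      exact ⟨by simp, Or.inl (by simp [ghR])⟩
    · -- left cycle vertex with value 0 : x ∈ {1,3,4}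
      simp only [fup] at hv
      have hx : ¬ (x.val = 0 ∨ x.val = 2) := by intro h; rw [if_pos h] at hv; simp at hv
      have : ∃ y : Fin 5, (y.val = 0 ∨ y.val = 2) ∧ cadj y x := by
        fin_cases x <;> simp at hx ⊢ <;> first
          | exact Or.inl (by decide) | exact Or.inr ⟨2, by decide⟩
      obtain ⟨y, hy0, hyx⟩ := this
      refine Or.inr ⟨.inr (w, .inl y), ?_, by simp only [fup]; rw [if_pos hy0]⟩
      rw [GH, SimpleGraph.fromRel_adj]
      refine ⟨?_, ?_⟩
      · simp only [ne_eq, Sum.inr.injEq, Prod.mk.injEq, Sum.inr.injEq, true_and]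
        intro h; apply hx
        obtain ⟨-, rfl⟩ := h
        exact hy0
      · rcases hyx with h | h
        · exact Or.inr (by simp [ghR, h])
        · exact Or.inl (by simp [ghR, h])
    · simp only [fup] at hv
      have hx : ¬ (x.val = 0 ∨ x.val = 2) := by intro h; rw [if_pos h] at hv; simp at hv
      have : ∃ y : Fin 5, (y.val = 0 ∨ y.val = 2) ∧ cadj y x := by
        fin_cases x <;> simp at hx ⊢ <;> first
          | exact Or.inl (by decide) | exact Or.inr ⟨2, by decide⟩
      obtain ⟨y, hy0, hyx⟩ := this
      refine Or.inr ⟨.inr (w, .inr y), ?_, by simp only [fup]; rw [if_pos hy0]⟩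
      rw [GH, SimpleGraph.fromRel_adj]
      refine ⟨?_, ?_⟩
      · simp only [ne_eq, Sum.inr.injEq, Prod.mk.injEq, Sum.inr.injEq, true_and]
        intro h; apply hx
        obtain ⟨-, rfl⟩ := h
        exact hy0
      · rcases hyx with h | h
        · exact Or.inr (by simp [ghR, h])
        · exact Or.inl (by simp [ghR, h])
  · rintro (a | ⟨w, x | x⟩) <;> intro hv <;> simp [fup] at hv <;> split at hv <;> omega

theorem fup_sum {W : Type} [Fintype W] :
    ∑ v : W ⊕ W × HTail, fup v = 12 * Fintype.card W := by
  rw [Fintype.sum_sum_type]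
  have h1 : ∑ a : W, fup (Sum.inl a : W ⊕ W × HTail) = 0 := by simp [fup]
  rw [h1, Fintype.sum_prod_type]
  have h2 : ∀ w : W, ∑ t : HTail, fup (Sum.inr (w, t)) = 12 := by
    intro w
    rw [Fintype.sum_sum_type]
    simp only [fup]
    simp [Fin.sum_univ_five]
  simp [h2, Finset.sum_const, mul_comm]

theorem gamma_eq {W : Type} [Fintype W] (G : SimpleGraph W) :
    gammaDR (GH G) = 12 * Fintype.card W := by
  have hmem : 12 * Fintype.card W ∈ {w | ∃ f, IsDRDF (GH G) f ∧ ∑ v, f v = w} :=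
    ⟨fup, fup_drdf G, fup_sum⟩
  refine le_antisymm (Nat.sInf_le hmem) ?_
  refine le_csInf ⟨_, hmem⟩ ?_
  rintro b ⟨f, hf, rfl⟩
  have hbound : ∀ w : W, 12 ≤ f (.inl w) + (∑ x : Fin 5, f (.inr (w, .inl x)))
      + (∑ x : Fin 5, f (.inr (w, .inr x))) := by
    intro w
    have hL := key (f (.inl w)) (fun x => f (.inr (w, .inl x))) (hf.1 _) (fun x => hf.1 _)
      (pn_of_drdf_left G f hf w)
    have hR := key (f (.inl w)) (fun x => f (.inr (w, .inr x))) (hf.1 _) (fun x => hf.1 _)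
      (pn_of_drdf_right G f hf w)
    omega
  calc 12 * Fintype.card W = ∑ _w : W, 12 := by simp [mul_comm]
    _ ≤ ∑ w : W, (f (.inl w) + (∑ x : Fin 5, f (.inr (w, .inl x)))
        + (∑ x : Fin 5, f (.inr (w, .inr x)))) := Finset.sum_le_sum fun w _ => hbound w
    _ = ∑ v, f v := by
        rw [Fintype.sum_sum_type, Fintype.sum_prod_type]
        rw [← Finset.sum_add_distrib]
        congr 1; funext w
        rw [Fintype.sum_sum_type]; ring

/-- For every graph `G`, the graph `G_H` has order `n(G_H) = 11·|V(G)|` and satisfies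
`γ_dR(G_H) = 12·n(G_H)/11`. -/
theorem gammaDR_GH_eq {W : Type} [Fintype W] (G : SimpleGraph W) :
    Fintype.card (W ⊕ W × HTail) = 11 * Fintype.card W ∧
      (gammaDR (GH G) : ℚ) = 12 * (Fintype.card (W ⊕ W × HTail)) / 11 := by
  have hcard : Fintype.card (W ⊕ W × HTail) = 11 * Fintype.card W := by
    simp [Fintype.card_sum, Fintype.card_prod]; ring
  refine ⟨hcard, ?_⟩
  rw [gamma_eq G, hcard]
  push_cast
  ring
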